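/- Let L = diag(L_1,…,L_n) with L_i > 0 and fix τ with 2 ≤ τ ≤ n. Sample a random subset I of [n] with |I| = τ according to the distribution P(I) = (e_Iᵀ L⁻¹ e_I) / Σ_{J: |J|=τ} (e_Jᵀ L⁻¹ e_J). Then 𝔼_I[P_I] = ((τ−1)/(n−1)) P_{[n]}, where P_I = 𝕀_I − (1/(e_Iᵀ L⁻¹ e_I)) L⁻¹ e_I e_Iᵀ. -/

import Mathlib

open Matrix BigOperators Finset

/-- Under the sampling distribution `P(I) ∝ e_Iᵀ L⁻¹ e_I` over subsets of
cardinality τ, the expectation of `P_I` equals `((τ−1)/(n−1)) P_{[n]}`. -/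
lemma count_supersets {α : Type*} [DecidableEq α] [Fintype α] (τ : ℕ) (s : Finset α)
    (hs : s.card ≤ τ) :
    ((Finset.powersetCard τ (Finset.univ : Finset α)).filter (fun I => s ⊆ I)).card
      = (Fintype.card α - s.card).choose (τ - s.card) := by
  have h : ((Finset.powersetCard τ (Finset.univ : Finset α)).filter (fun I => s ⊆ I)).card
      = (sᶜ.powersetCard (τ - s.card)).card := by
    apply Finset.card_bij (fun I _ => I \ s)
    · intro I hI
      simp only [Finset.mem_filter, Finset.mem_powersetCard] at hI
      rw [Finset.mem_powersetCard]
      refine ⟨fun x hx => ?_, ?_⟩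
      · rw [Finset.mem_sdiff] at hx
        simpa using hx.2
      · rw [Finset.card_sdiff_of_subset hI.2, hI.1.2]
    · intro I hI J hJ h
      simp only [Finset.mem_filter] at hI hJ
      have := congrArg (· ∪ s) h
      simpa [Finset.sdiff_union_of_subset hI.2, Finset.sdiff_union_of_subset hJ.2] using this
    · intro J hJ
      rw [Finset.mem_powersetCard] at hJ
      have hdisj : Disjoint J s := by
        rw [Finset.disjoint_left]
        intro x hx
        simpa using hJ.1 hx
      refine ⟨J ∪ s, ?_, ?_⟩
      · simp only [Finset.mem_filter, Finset.mem_powersetCard]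
        refine ⟨⟨Finset.subset_univ _, ?_⟩, Finset.subset_union_right⟩
        rw [Finset.card_union_of_disjoint hdisj, hJ.2, Nat.sub_add_cancel hs]
      · rw [Finset.union_sdiff_right, Finset.sdiff_eq_self_of_disjoint hdisj]
  rw [h, Finset.card_powersetCard, Finset.card_compl]

theorem stmt3 {n : ℕ} (τ : ℕ) (hτ : 2 ≤ τ) (hτn : τ ≤ n)
    (L : Fin n → ℝ) (hL : ∀ i, 0 < L i) :
    let eI : Finset (Fin n) → (Fin n → ℝ) := fun I i => if i ∈ I then 1 else 0
    let c : Finset (Fin n) → ℝ := fun I => ∑ i ∈ I, (L i)⁻¹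
    let P : Finset (Fin n) → Matrix (Fin n) (Fin n) ℝ := fun I =>
      Matrix.diagonal (eI I) -
        (c I)⁻¹ • Matrix.vecMulVec (fun i => (L i)⁻¹ * eI I i) (eI I)
    let Psets := Finset.powersetCard τ (Finset.univ : Finset (Fin n))
    let p : Finset (Fin n) → ℝ := fun I => c I / ∑ J ∈ Psets, c J
    ∑ I ∈ Psets, p I • P I = (((τ : ℝ) - 1) / ((n : ℝ) - 1)) • P Finset.univ := by
  intro eI c P Psets p
  have hn2 : 2 ≤ n := le_trans hτ hτn
  have hτ1 : 1 ≤ τ := le_trans one_le_two hτ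
  set T : ℝ := ∑ k : Fin n, (L k)⁻¹ with hTdef
  have hT : 0 < T := Finset.sum_pos (fun k _ => inv_pos.2 (hL k)) ⟨⟨0, by omega⟩, Finset.mem_univ _⟩
  have hcmem : ∀ I ∈ Psets, 0 < c I := by
    intro I hI
    simp only [Psets, Finset.mem_powersetCard] at hI
    exact Finset.sum_pos (fun k _ => inv_pos.2 (hL k)) (Finset.card_pos.mp (by omega))
  set N1 : ℝ := ((n - 1).choose (τ - 1) : ℝ) with hN1def
  set N2 : ℝ := ((n - 2).choose (τ - 2) : ℝ) with hN2def
  have hN1 : 0 < N1 := by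
    rw [hN1def]
    exact_mod_cast Nat.choose_pos (by omega)
  -- counting lemma, real-valued
  have hcount : ∀ s : Finset (Fin n), s.card ≤ τ →
      ∑ I ∈ Psets, (if s ⊆ I then (1:ℝ) else 0) = ((n - s.card).choose (τ - s.card) : ℝ) := by
    intro s hs
    rw [Finset.sum_boole]
    have := count_supersets τ s hs
    rw [Fintype.card_fin] at this
    exact_mod_cast congrArg (Nat.cast : ℕ → ℝ) this
  have h1 : ∀ i : Fin n, ∑ I ∈ Psets, (if i ∈ I then (1:ℝ) else 0) = N1 := by
    intro i
    rw [hN1def]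
    have := hcount {i} (by simpa using hτ1)
    simpa [Finset.singleton_subset_iff] using this
  have h2 : ∀ i j : Fin n, i ≠ j →
      ∑ I ∈ Psets, (if i ∈ I then (1:ℝ) else 0) * (if j ∈ I then 1 else 0) = N2 := by
    intro i j hij
    have hc : ({i, j} : Finset (Fin n)).card = 2 := Finset.card_pair hij
    have h := hcount {i, j} (by omega)
    rw [hc] at h
    rw [hN2def, ← h]
    apply Finset.sum_congr rfl
    intro I _
    by_cases hi : i ∈ I <;> by_cases hj : j ∈ I <;>
      simp [hi, hj, Finset.insert_subset_iff]
  have hcrw : ∀ J : Finset (Fin n), c J = ∑ k : Fin n, (if k ∈ J then (1:ℝ) else 0) * (L k)⁻¹ := by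
    intro J
    simp only [c, ite_mul, one_mul, zero_mul, Finset.sum_ite_mem, Finset.univ_inter]
  have hS : ∑ J ∈ Psets, c J = N1 * T := by
    calc ∑ J ∈ Psets, c J
        = ∑ J ∈ Psets, ∑ k : Fin n, (if k ∈ J then (1:ℝ) else 0) * (L k)⁻¹ :=
          Finset.sum_congr rfl (fun J _ => hcrw J)
      _ = ∑ k : Fin n, (∑ J ∈ Psets, (if k ∈ J then (1:ℝ) else 0)) * (L k)⁻¹ := by
          rw [Finset.sum_comm]
          exact Finset.sum_congr rfl (fun k _ => (Finset.sum_mul ..).symm)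
      _ = ∑ k : Fin n, N1 * (L k)⁻¹ := by
          exact Finset.sum_congr rfl (fun k _ => by rw [h1 k])
      _ = N1 * T := by rw [hTdef, Finset.mul_sum]
  have hsq : ∀ (i : Fin n) (I : Finset (Fin n)),
      (if i ∈ I then (1:ℝ) else 0) * (if i ∈ I then (1:ℝ) else 0) = (if i ∈ I then 1 else 0) := by
    intro i I; by_cases h : i ∈ I <;> simp [h]
  have hA : ∀ i : Fin n, ∑ I ∈ Psets, (if i ∈ I then (1:ℝ) else 0) * c I
      = N1 * (L i)⁻¹ + N2 * (T - (L i)⁻¹) := by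
    intro i
    calc ∑ I ∈ Psets, (if i ∈ I then (1:ℝ) else 0) * c I
        = ∑ I ∈ Psets, ∑ k : Fin n,
            ((if i ∈ I then (1:ℝ) else 0) * (if k ∈ I then 1 else 0)) * (L k)⁻¹ := by
          refine Finset.sum_congr rfl (fun I _ => ?_)
          rw [hcrw I, Finset.mul_sum]
          exact Finset.sum_congr rfl (fun k _ => by ring)
      _ = ∑ k : Fin n, (∑ I ∈ Psets,
            (if i ∈ I then (1:ℝ) else 0) * (if k ∈ I then 1 else 0)) * (L k)⁻¹ := by
          rw [Finset.sum_comm]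
          exact Finset.sum_congr rfl (fun k _ => (Finset.sum_mul ..).symm)
      _ = ∑ k : Fin n, (if k = i then N1 else N2) * (L k)⁻¹ := by
          refine Finset.sum_congr rfl (fun k _ => ?_)
          by_cases hk : k = i
          · subst hk
            rw [if_pos rfl]
            congr 1
            rw [← h1 k]
            exact Finset.sum_congr rfl (fun I _ => hsq k I)
          · rw [if_neg hk, h2 i k (fun h => hk h.symm)]
      _ = ∑ k : Fin n, (N2 * (L k)⁻¹ + if k = i then (N1 - N2) * (L k)⁻¹ else 0) := by
          refine Finset.sum_congr rfl (fun k _ => ?_)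
          by_cases hk : k = i <;> simp [hk] <;> ring
      _ = N1 * (L i)⁻¹ + N2 * (T - (L i)⁻¹) := by
          rw [Finset.sum_add_distrib, ← Finset.mul_sum,
            Finset.sum_ite_eq' Finset.univ i (fun k => (N1 - N2) * (L k)⁻¹),
            if_pos (Finset.mem_univ i), ← hTdef]
          ring
  have key : ((n:ℝ) - 1) * N2 = ((τ:ℝ) - 1) * N1 := by
    have hnat : (n - 1) * ((n - 2).choose (τ - 2)) = ((n - 1).choose (τ - 1)) * (τ - 1) := by
      have e1 : n - 1 = (n - 2) + 1 := by omega
      have e2 : τ - 1 = (τ - 2) + 1 := by omega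
      rw [e1, e2]
      exact Nat.add_one_mul_choose_eq (n - 2) (τ - 2)
    have := congrArg (Nat.cast : ℕ → ℝ) hnat
    push_cast [Nat.cast_sub (by omega : 1 ≤ n), Nat.cast_sub (by omega : 1 ≤ τ)] at this
    rw [hN1def, hN2def]
    linarith [this]
  have hT0 : T ≠ 0 := ne_of_gt hT
  have hN10 : N1 ≠ 0 := ne_of_gt hN1
  have hn1 : (n:ℝ) - 1 ≠ 0 := by
    have : (2:ℝ) ≤ n := by exact_mod_cast hn2
    linarith
  have hcuniv : c Finset.univ = T := rfl
  ext i j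
  simp only [Matrix.sum_apply, Matrix.smul_apply, Matrix.sub_apply, Matrix.diagonal_apply,
    Matrix.vecMulVec_apply, smul_eq_mul, p, P, eI, hcuniv]
  have hterm : ∀ I ∈ Psets, c I / (∑ J ∈ Psets, c J) *
      ((if i = j then (if i ∈ I then (1:ℝ) else 0) else 0) -
        (c I)⁻¹ * (((L i)⁻¹ * (if i ∈ I then 1 else 0)) * (if j ∈ I then 1 else 0)))
      = ((if i = j then (if i ∈ I then (1:ℝ) else 0) else 0) * c I
          - (L i)⁻¹ * ((if i ∈ I then (1:ℝ) else 0) * (if j ∈ I then 1 else 0)))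
        / (N1 * T) := by
    intro I hI
    have hcI : c I ≠ 0 := ne_of_gt (hcmem I hI)
    rw [hS]
    generalize (if i = j then (if i ∈ I then (1:ℝ) else 0) else 0) = A
    generalize (if i ∈ I then (1:ℝ) else 0) = bi
    generalize (if j ∈ I then (1:ℝ) else 0) = bj
    field_simp [hcI, (hL i).ne']
  rw [Finset.sum_congr rfl hterm, ← Finset.sum_div, Finset.sum_sub_distrib, ← Finset.mul_sum]
  simp only [Finset.mem_univ, if_true, mul_one]
  by_cases hij : i = j
  · subst hij
    simp only [eq_self_iff_true, if_true, ite_true]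
    rw [Finset.sum_congr rfl (fun I _ => hsq i I), h1 i, hA i]
    rw [show (1:ℝ) - T⁻¹ * (L i)⁻¹ = (T - (L i)⁻¹) / T from by rw [sub_div, div_self hT0, div_eq_mul_inv, mul_comm],
      div_mul_div_comm, div_eq_div_iff (mul_ne_zero hN10 hT0) (mul_ne_zero hn1 hT0)]
    linear_combination (T * (T - (L i)⁻¹)) * key
  · simp only [if_neg hij, zero_mul, Finset.sum_const_zero]
    rw [h2 i j hij]
    rw [show (0:ℝ) - T⁻¹ * (L i)⁻¹ = (0 - (L i)⁻¹) / T from by rw [sub_div, zero_div, div_eq_mul_inv, mul_comm],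
      div_mul_div_comm, div_eq_div_iff (mul_ne_zero hN10 hT0) (mul_ne_zero hn1 hT0)]
    linear_combination (-((L i)⁻¹ * T)) * key
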